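/- For four distinct complex numbers f, f₁, f₁₂, f₂ with f₁₂ + f ≠ f₁ + f₂ and nonzero reals α₁, α₂, the relation α₁/(f₁-f) + α₂/(f₁₂-f₁) = α₂/(f₂-f) + α₁/(f₁₂-f₂) holds if and only if the cross-ratio ((f₁-f)(f₁₂-f₂))/((f₁₂-f₁)(f₂-f)) equals α₁/α₂. -/

import Mathlib

/-- The Moutard-type relation for a quadrilateral in `ℂ` is equivalent to the
factorization of its cross-ratio as `α₁/α₂`. -/
theorem moutard_relation_iff_cross_ratio
    (f f₁ f₂ f₁₂ : ℂ)
    (hd1 : f ≠ f₁) (hd2 : f ≠ f₂) (hd3 : f ≠ f₁₂)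
    (hd4 : f₁ ≠ f₂) (hd5 : f₁ ≠ f₁₂) (hd6 : f₂ ≠ f₁₂)
    (hgen : f₁₂ + f ≠ f₁ + f₂)
    (α₁ α₂ : ℝ) (hα₁ : α₁ ≠ 0) (hα₂ : α₂ ≠ 0) :
    ((α₁ : ℂ) / (f₁ - f) + (α₂ : ℂ) / (f₁₂ - f₁) =
        (α₂ : ℂ) / (f₂ - f) + (α₁ : ℂ) / (f₁₂ - f₂)) ↔
      (f₁ - f) * (f₁₂ - f₂) / ((f₁₂ - f₁) * (f₂ - f)) = ((α₁ / α₂ : ℝ) : ℂ) := by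
  have hA : f₁ - f ≠ 0 := sub_ne_zero.2 hd1.symm
  have hB : f₁₂ - f₁ ≠ 0 := sub_ne_zero.2 hd5.symm
  have hC : f₂ - f ≠ 0 := sub_ne_zero.2 hd2.symm
  have hD : f₁₂ - f₂ ≠ 0 := sub_ne_zero.2 hd6.symm
  have hs : f₁₂ + f - (f₁ + f₂) ≠ 0 := sub_ne_zero.2 hgen
  have ha1 : (α₁ : ℂ) ≠ 0 := Complex.ofReal_ne_zero.2 hα₁
  have ha2 : (α₂ : ℂ) ≠ 0 := Complex.ofReal_ne_zero.2 hα₂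
  have key : ∀ {x y : ℂ}, (f₁₂ + f - (f₁ + f₂)) * x = (f₁₂ + f - (f₁ + f₂)) * y → x = y :=
    fun h => mul_left_cancel₀ hs h
  constructor
  · intro h
    field_simp at h
    have k : (α₂ : ℂ) * ((f₁ - f) * (f₁₂ - f₂)) = (α₁ : ℂ) * ((f₁₂ - f₁) * (f₂ - f)) := by
      apply key
      linear_combination -h
    rw [Complex.ofReal_div]
    field_simp
    linear_combination k
  · intro h
    rw [Complex.ofReal_div] at h
    field_simp at h
    field_simp
    linear_combination -(f₁₂ + f - (f₁ + f₂)) * h
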